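/- (Lower bound by exponential decay of the initial datum) Let g, h : [0,T] → ℝ be continuous with h(0) = h0, g(0) = −h0, h strictly increasing and g strictly decreasing (in the uniform-difference-quotient sense: inf_{0≤t1<t2≤T} (h(t2)−h(t1))/(t2−t1) > 0, sup_{0≤t1<t2≤T} (g(t2)−g(t1))/(t2−t1) < 0), and let v be the unique solution of the fixed-front problem ∂ₜv(t,x) = d∫_{g(t)}^{h(t)} J(x−y) v(t,y) dy − d·v(t,x) + f(t,x,v(t,x)) for 0 < t < T, g(t) < x < h(t), with v(t,g(t)) = v(t,h(t)) = 0 and v(0,·) = u0 on [−h0,h0], satisfying 0 < v ≤ M0 := max{ sup u0, K0 }. Then, with K(M0) a uniform Lipschitz constant for f(t,x,·) on [0,M0], one has v(t,x) ≥ e^{−(d + K(M0)) t} u0(x) for all x ∈ [−h0,h0] and t ∈ (0,T). -/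
import Mathlib


open MeasureTheory Set Filter Topology

/-- A solution of the nonlocal problem with prescribed (fixed) moving fronts `g, h`
on the time interval `[0, T)`. -/
def IsFixedFrontSol (d h0 T : ℝ) (J : ℝ → ℝ) (f : ℝ → ℝ → ℝ → ℝ)
    (u0 : ℝ → ℝ) (g h : ℝ → ℝ) (v : ℝ → ℝ → ℝ) : Prop :=
  ContinuousOn (fun p : ℝ × ℝ => v p.1 p.2)
    {p : ℝ × ℝ | 0 ≤ p.1 ∧ p.1 < T ∧ g p.1 ≤ p.2 ∧ p.2 ≤ h p.1} ∧
  (∀ t x, 0 < t → t < T → g t < x → x < h t →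
    HasDerivAt (fun s => v s x)
      (d * (∫ y in g t..h t, J (x - y) * v t y) - d * v t x + f t x (v t x)) t) ∧
  (∀ t, 0 < t → t < T → v t (g t) = 0 ∧ v t (h t) = 0) ∧
  (∀ x, -h0 ≤ x → x ≤ h0 → v 0 x = u0 x)

/-- **Lower bound by exponential decay of the initial datum** (estimate (2.13) of
Cao–Du–Li–Li). -/
theorem lower_bound_exp_decay
    (J : ℝ → ℝ) (hJc : Continuous J) (hJnn : ∀ x, 0 ≤ J x)
    (hJeven : ∀ x, J (-x) = J x) (hJbdd : BddAbove (Set.range J))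
    (hJ0 : 0 < J 0) (hJint : Integrable J) (hJ1 : (∫ x, J x) = 1)
    (f : ℝ → ℝ → ℝ → ℝ)
    (hfc : ContinuousOn (fun p : ℝ × ℝ × ℝ => f p.1 p.2.1 p.2.2)
      {p : ℝ × ℝ × ℝ | 0 ≤ p.1 ∧ 0 ≤ p.2.2})
    (hf0 : ∀ t x, 0 ≤ t → f t x 0 = 0)
    (hfLip : ∀ L > 0, ∃ K > 0, ∀ t x u1 u2, 0 ≤ t → u1 ∈ Set.Icc 0 L → u2 ∈ Set.Icc 0 L →
      |f t x u1 - f t x u2| ≤ K * |u1 - u2|)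
    (K0 : ℝ) (hK0 : 0 < K0)
    (hfneg : ∀ t x u, 0 ≤ t → K0 ≤ u → f t x u < 0)
    (d h0 T : ℝ) (hd : 0 < d) (hh0 : 0 < h0) (hT : 0 < T)
    (u0 : ℝ → ℝ) (hu0c : ContinuousOn u0 (Set.Icc (-h0) h0))
    (hu0l : u0 (-h0) = 0) (hu0r : u0 h0 = 0)
    (hu0pos : ∀ x, -h0 < x → x < h0 → 0 < u0 x)
    (g h : ℝ → ℝ)
    (hgc : ContinuousOn g (Set.Icc 0 T)) (hhc : ContinuousOn h (Set.Icc 0 T))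
    (hh00 : h 0 = h0) (hg00 : g 0 = -h0)
    (hhinc : ∃ c > 0, ∀ t1 t2, 0 ≤ t1 → t1 < t2 → t2 ≤ T → c ≤ (h t2 - h t1) / (t2 - t1))
    (hgdec : ∃ c > 0, ∀ t1 t2, 0 ≤ t1 → t1 < t2 → t2 ≤ T → (g t2 - g t1) / (t2 - t1) ≤ -c)
    (M0 KM0 : ℝ)
    (hM0 : M0 = max (sSup (u0 '' Set.Icc (-h0) h0)) K0)
    (hKM0 : ∀ t x, 0 ≤ t → ∀ u1 ∈ Set.Icc 0 M0, ∀ u2 ∈ Set.Icc 0 M0,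
      |f t x u1 - f t x u2| ≤ KM0 * |u1 - u2|)
    (v : ℝ → ℝ → ℝ)
    (hsol : IsFixedFrontSol d h0 T J f u0 g h v)
    (hbd : ∀ t x, 0 < t → t < T → g t < x → x < h t → 0 < v t x ∧ v t x ≤ M0) :
    ∀ x, -h0 ≤ x → x ≤ h0 → ∀ t, 0 < t → t < T →
      Real.exp (-(d + KM0) * t) * u0 x ≤ v t x := by

  obtain ⟨hvc, hvEq, hvBd, hv0⟩ := hsol
  obtain ⟨cg, hcgpos, Hg⟩ := hgdec
  obtain ⟨ch, hchpos, Hh⟩ := hhinc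
  have hgs : ∀ s, 0 < s → s ≤ T → g s < -h0 := by
    intro s hs hsT
    have h1 := Hg 0 s le_rfl hs hsT
    rw [div_le_iff₀ (by linarith)] at h1
    rw [hg00] at h1
    nlinarith
  have hhs : ∀ s, 0 < s → s ≤ T → h0 < h s := by
    intro s hs hsT
    have h1 := Hh 0 s le_rfl hs hsT
    rw [le_div_iff₀ (by linarith)] at h1
    rw [hh00] at h1
    nlinarith
  intro x hx1 hx2 t ht htT
  set c : ℝ := d + KM0 with hc
  set φ : ℝ → ℝ := fun s => Real.exp (c * s) * v s x with hφdef
  have hM0pos : 0 < M0 := lt_of_lt_of_le hK0 (hM0 ▸ le_max_right _ _)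
  have hin : ∀ s, 0 < s → s < T → g s < x ∧ x < h s := fun s hs hsT =>
    ⟨lt_of_lt_of_le (hgs s hs hsT.le) hx1, lt_of_le_of_lt hx2 (hhs s hs hsT.le)⟩
  have hcont : ContinuousOn φ (Set.Icc 0 t) := by
    apply ContinuousOn.mul
    · exact (Real.continuous_exp.comp (continuous_const.mul continuous_id)).continuousOn
    · apply hvc.comp (Continuous.continuousOn (continuous_id.prodMk continuous_const))
      intro s hs
      simp only [id, Set.mem_setOf_eq]
      refine ⟨hs.1, lt_of_le_of_lt hs.2 htT, ?_, ?_⟩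
      · rcases hs.1.eq_or_lt with h0s | h0s
        · rw [← h0s, hg00]; exact hx1
        · exact (hin s h0s (lt_of_le_of_lt hs.2 htT)).1.le
      · rcases hs.1.eq_or_lt with h0s | h0s
        · rw [← h0s, hh00]; exact hx2
        · exact (hin s h0s (lt_of_le_of_lt hs.2 htT)).2.le
  have hderiv : ∀ s ∈ Set.Ioo 0 t, HasDerivAt φ
      (Real.exp (c * s) * (c * 1) * v s x + Real.exp (c * s) *
        (d * (∫ y in g s..h s, J (x - y) * v s y) - d * v s x + f s x (v s x))) s := by
    intro s hs
    have hsT : s < T := hs.2.trans htT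
    have hW := hvEq s x hs.1 hsT (hin s hs.1 hsT).1 (hin s hs.1 hsT).2
    exact (((hasDerivAt_id s).const_mul c).exp).mul hW
  have hmono : MonotoneOn φ (Set.Icc 0 t) := by
    apply monotoneOn_of_deriv_nonneg (convex_Icc 0 t) hcont
    · rw [interior_Icc]
      intro s hs
      exact (hderiv s hs).differentiableAt.differentiableWithinAt
    · rw [interior_Icc]
      intro s hs
      rw [(hderiv s hs).deriv]
      have hsT : s < T := hs.2.trans htT
      have hgh : g s ≤ h s := by
        have := hgs s hs.1 hsT.le; have := hhs s hs.1 hsT.le; linarith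
      have hvpos : 0 < v s x := (hbd s x hs.1 hsT (hin s hs.1 hsT).1 (hin s hs.1 hsT).2).1
      have hvle : v s x ≤ M0 := (hbd s x hs.1 hsT (hin s hs.1 hsT).1 (hin s hs.1 hsT).2).2
      have hInt : 0 ≤ ∫ y in g s..h s, J (x - y) * v s y := by
        apply intervalIntegral.integral_nonneg hgh
        intro y hy
        have hv : 0 ≤ v s y := by
          rcases hy.1.eq_or_lt with h1 | h1
          · rw [← h1, (hvBd s hs.1 hsT).1]
          · rcases hy.2.eq_or_lt with h2 | h2
            · rw [h2, (hvBd s hs.1 hsT).2]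
            · exact (hbd s y hs.1 hsT h1 h2).1.le
        exact mul_nonneg (hJnn _) hv
      have hfb : -(KM0 * v s x) ≤ f s x (v s x) := by
        have hmem : v s x ∈ Set.Icc 0 M0 := ⟨hvpos.le, hvle⟩
        have h0mem : (0 : ℝ) ∈ Set.Icc 0 M0 := ⟨le_rfl, hM0pos.le⟩
        have hest := hKM0 s x hs.1.le _ hmem 0 h0mem
        rw [hf0 s x hs.1.le, sub_zero, sub_zero, abs_of_nonneg hvpos.le] at hest
        linarith [(abs_le.mp hest).1]
      have hinner : 0 ≤ c * v s x +
          (d * (∫ y in g s..h s, J (x - y) * v s y) - d * v s x + f s x (v s x)) := by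
        rw [hc]
        have := mul_nonneg hd.le hInt
        linarith
      calc (0 : ℝ) ≤ Real.exp (c * s) * (c * v s x +
              (d * (∫ y in g s..h s, J (x - y) * v s y) - d * v s x + f s x (v s x))) :=
            mul_nonneg (Real.exp_pos _).le hinner
        _ = Real.exp (c * s) * (c * 1) * v s x + Real.exp (c * s) *
              (d * (∫ y in g s..h s, J (x - y) * v s y) - d * v s x + f s x (v s x)) := by
            ring
  have hkey : φ 0 ≤ φ t := hmono ⟨le_rfl, ht.le⟩ ⟨ht.le, le_rfl⟩ ht.le
  have hφ0 : φ 0 = u0 x := by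
    simp only [hφdef, mul_zero, Real.exp_zero, one_mul]
    exact hv0 x hx1 hx2
  have hφt : φ t = Real.exp (c * t) * v t x := rfl
  rw [hφ0, hφt] at hkey
  have hepos : (0 : ℝ) < Real.exp (c * t) := Real.exp_pos _
  have : Real.exp (-(d + KM0) * t) = (Real.exp (c * t))⁻¹ := by
    rw [← Real.exp_neg, hc]; ring_nf
  rw [this, inv_mul_le_iff₀ hepos]
  exact hkey
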